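/- (Uniqueness structure of minimizers.) Let K̂ = Cov(X,Y) Cov(Y)⁻. A matrix K ∈ ℝ^{p×q} minimizes E‖X − K Y‖²_D if and only if K = K̂ + A + B for some A with A Cov(Y) = 0 and some B with D B = 0. -/

import Mathlib

open Matrix MeasureTheory ProbabilityTheory
open scoped ENNReal
set_option linter.unusedSectionVars false
set_option maxHeartbeats 1000000

/-- Cross-covariance matrix `E[U Wᵀ]` of two mean-zero random vectors. -/
noncomputable def covMatrix {Ω : Type*} [MeasurableSpace Ω] (μ : Measure Ω)
    {p q : ℕ} (U : Ω → Fin p → ℝ) (W : Ω → Fin q → ℝ) :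
    Matrix (Fin p) (Fin q) ℝ :=
  Matrix.of fun i j => ∫ ω, U ω i * W ω j ∂μ

section Aux

variable {Ω : Type*} [MeasurableSpace Ω] {μ : Measure Ω} [IsProbabilityMeasure μ]

lemma l2_mul_int {u w : Ω → ℝ} (hu : MemLp u 2 μ) (hw : MemLp w 2 μ) :
    Integrable (fun ω => u ω * w ω) μ := by
  have h : (1 : ℝ≥0∞) / 1 = 1 / 2 + 1 / 2 := by
    rw [ENNReal.add_halves]; norm_num
  have := hw.smul (r := 1) (hpqr := ⟨by rw [inv_one, ENNReal.inv_two_add_inv_two]⟩) hu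
  rw [memLp_one_iff_integrable] at this
  exact this

lemma memL2_mulVec {n m : ℕ} (A : Matrix (Fin m) (Fin n) ℝ) {U : Ω → Fin n → ℝ}
    (hU : ∀ i, MemLp (fun ω => U ω i) 2 μ) (i : Fin m) :
    MemLp (fun ω => A.mulVec (U ω) i) 2 μ := by
  simp only [Matrix.mulVec, dotProduct]
  exact memLp_finset_sum _ (fun j _ => (hU j).const_mul (A i j))

lemma memL2_dot {n : ℕ} (v : Fin n → ℝ) {U : Ω → Fin n → ℝ}
    (hU : ∀ i, MemLp (fun ω => U ω i) 2 μ) :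
    MemLp (fun ω => v ⬝ᵥ U ω) 2 μ := by
  simp only [dotProduct]
  exact memLp_finset_sum _ (fun j _ => (hU j).const_mul (v j))

variable {n m k : ℕ}

lemma covMatrix_sub_left {U V : Ω → Fin n → ℝ} {W : Ω → Fin k → ℝ}
    (hU : ∀ i, MemLp (fun ω => U ω i) 2 μ) (hV : ∀ i, MemLp (fun ω => V ω i) 2 μ)
    (hW : ∀ i, MemLp (fun ω => W ω i) 2 μ) :
    covMatrix μ (fun ω => U ω - V ω) W = covMatrix μ U W - covMatrix μ V W := by
  ext i j
  simp only [covMatrix, Matrix.of_apply, Matrix.sub_apply, Pi.sub_apply, sub_mul]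
  exact integral_sub (l2_mul_int (hU i) (hW j)) (l2_mul_int (hV i) (hW j))

lemma covMatrix_sub_right {U : Ω → Fin n → ℝ} {W V : Ω → Fin k → ℝ}
    (hU : ∀ i, MemLp (fun ω => U ω i) 2 μ) (hW : ∀ i, MemLp (fun ω => W ω i) 2 μ)
    (hV : ∀ i, MemLp (fun ω => V ω i) 2 μ) :
    covMatrix μ U (fun ω => W ω - V ω) = covMatrix μ U W - covMatrix μ U V := by
  ext i j
  simp only [covMatrix, Matrix.of_apply, Matrix.sub_apply, Pi.sub_apply, mul_sub]
  exact integral_sub (l2_mul_int (hU i) (hW j)) (l2_mul_int (hU i) (hV j))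

lemma covMatrix_mulVec_left (A : Matrix (Fin m) (Fin n) ℝ) {U : Ω → Fin n → ℝ}
    {W : Ω → Fin k → ℝ}
    (hU : ∀ i, MemLp (fun ω => U ω i) 2 μ) (hW : ∀ i, MemLp (fun ω => W ω i) 2 μ) :
    covMatrix μ (fun ω => A.mulVec (U ω)) W = A * covMatrix μ U W := by
  ext i j
  simp only [covMatrix, Matrix.of_apply, Matrix.mul_apply, Matrix.mulVec, dotProduct]
  rw [show (fun ω => (∑ l, A i l * U ω l) * W ω j)
      = fun ω => ∑ l, A i l * (U ω l * W ω j) by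
    funext ω; rw [Finset.sum_mul]; exact Finset.sum_congr rfl fun l _ => mul_assoc _ _ _]
  rw [integral_finset_sum _ (fun l _ => ((l2_mul_int (hU l) (hW j)).const_mul (A i l)))]
  exact Finset.sum_congr rfl fun l _ => integral_const_mul _ _

lemma covMatrix_mulVec_right (A : Matrix (Fin m) (Fin k) ℝ) {U : Ω → Fin n → ℝ}
    {W : Ω → Fin k → ℝ}
    (hU : ∀ i, MemLp (fun ω => U ω i) 2 μ) (hW : ∀ i, MemLp (fun ω => W ω i) 2 μ) :
    covMatrix μ U (fun ω => A.mulVec (W ω)) = covMatrix μ U W * Aᵀ := by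
  ext i j
  simp only [covMatrix, Matrix.of_apply, Matrix.mul_apply, Matrix.mulVec, dotProduct,
    Matrix.transpose_apply]
  rw [show (fun ω => U ω i * (∑ l, A j l * W ω l))
      = fun ω => ∑ l, A j l * (U ω i * W ω l) by
    funext ω; rw [Finset.mul_sum]; exact Finset.sum_congr rfl fun l _ => by ring]
  rw [integral_finset_sum _ (fun l _ => ((l2_mul_int (hU i) (hW l)).const_mul (A j l)))]
  exact Finset.sum_congr rfl fun l _ => by rw [integral_const_mul]; ring

lemma covMatrix_transpose {U : Ω → Fin n → ℝ} {W : Ω → Fin k → ℝ} :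
    (covMatrix μ U W)ᵀ = covMatrix μ W U := by
  ext i j
  simp only [covMatrix, Matrix.of_apply, Matrix.transpose_apply]
  congr 1; funext ω; ring

lemma covMatrix_quad {U : Ω → Fin n → ℝ}
    (hU : ∀ i, MemLp (fun ω => U ω i) 2 μ) (v : Fin n → ℝ) :
    v ⬝ᵥ (covMatrix μ U U).mulVec v = ∫ ω, (v ⬝ᵥ U ω) ^ 2 ∂μ := by
  simp only [dotProduct, Matrix.mulVec, covMatrix, Matrix.of_apply]
  rw [show (fun ω => (∑ i, v i * U ω i) ^ 2)
      = fun ω => ∑ i, ∑ j, v i * (v j * (U ω i * U ω j)) by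
    funext ω; rw [sq, Finset.sum_mul_sum]
    exact Finset.sum_congr rfl fun i _ => Finset.sum_congr rfl fun j _ => by ring]
  rw [integral_finset_sum _ (fun i _ => integrable_finset_sum _
    (fun j _ => (((l2_mul_int (hU i) (hU j)).const_mul (v j)).const_mul (v i))))]
  refine Finset.sum_congr rfl fun i _ => ?_
  rw [integral_finset_sum _ (fun j _ =>
    (((l2_mul_int (hU i) (hU j)).const_mul (v j)).const_mul (v i)))]
  rw [Finset.mul_sum]
  refine Finset.sum_congr rfl fun j _ => ?_
  rw [integral_const_mul, integral_const_mul]; ring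

lemma integral_quadform (Dm : Matrix (Fin n) (Fin n) ℝ) {U : Ω → Fin n → ℝ}
    (hU : ∀ i, MemLp (fun ω => U ω i) 2 μ) :
    ∫ ω, U ω ⬝ᵥ Dm.mulVec (U ω) ∂μ = ∑ i, ∑ a, Dm i a * covMatrix μ U U i a := by
  simp only [dotProduct, Matrix.mulVec, covMatrix, Matrix.of_apply]
  rw [show (fun ω => ∑ i, U ω i * ∑ a, Dm i a * U ω a)
      = fun ω => ∑ i, ∑ a, Dm i a * (U ω i * U ω a) by
    funext ω
    exact Finset.sum_congr rfl fun i _ => by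
      rw [Finset.mul_sum]; exact Finset.sum_congr rfl fun a _ => by ring]
  rw [integral_finset_sum _ (fun i _ => integrable_finset_sum _
    (fun a _ => ((l2_mul_int (hU i) (hU a)).const_mul (Dm i a))))]
  refine Finset.sum_congr rfl fun i _ => ?_
  rw [integral_finset_sum _ (fun a _ => ((l2_mul_int (hU i) (hU a)).const_mul (Dm i a)))]
  exact Finset.sum_congr rfl fun a _ => integral_const_mul _ _

lemma ker_covMatrix {U : Ω → Fin n → ℝ} {W : Ω → Fin k → ℝ}
    (hU : ∀ i, MemLp (fun ω => U ω i) 2 μ) (hW : ∀ i, MemLp (fun ω => W ω i) 2 μ)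
    {v : Fin k → ℝ} (hv : (covMatrix μ W W).mulVec v = 0) :
    (covMatrix μ U W).mulVec v = 0 := by
  have hg : MemLp (fun ω => v ⬝ᵥ W ω) 2 μ := memL2_dot v hW
  have hq : ∫ ω, (v ⬝ᵥ W ω) ^ 2 ∂μ = 0 := by
    rw [← covMatrix_quad hW v, hv, dotProduct_zero]
  have hg0 : (fun ω => v ⬝ᵥ W ω) =ᵐ[μ] 0 := by
    have h2 := (integral_eq_zero_iff_of_nonneg (fun ω => sq_nonneg (v ⬝ᵥ W ω))
      hg.integrable_sq).mp hq
    filter_upwards [h2] with ω h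
    simp only [Pi.zero_apply] at h ⊢
    exact pow_eq_zero_iff (by norm_num : (2:ℕ) ≠ 0) |>.mp h
  funext i
  simp only [Matrix.mulVec, dotProduct, covMatrix, Matrix.of_apply, Pi.zero_apply]
  have step1 : ∀ j : Fin k, (∫ ω, U ω i * W ω j ∂μ) * v j
      = ∫ ω, (U ω i * W ω j) * v j ∂μ := fun j => (integral_mul_const _ _).symm
  rw [Finset.sum_congr rfl fun j _ => step1 j]
  rw [← integral_finset_sum _ (fun j _ => (l2_mul_int (hU i) (hW j)).mul_const (v j))]
  have : (fun ω => ∑ j, (U ω i * W ω j) * v j) =ᵐ[μ] 0 := by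
    filter_upwards [hg0] with ω h
    have h' : ∑ j, v j * W ω j = 0 := h
    calc ∑ j, (U ω i * W ω j) * v j = U ω i * ∑ j, v j * W ω j := by
          rw [Finset.mul_sum]; exact Finset.sum_congr rfl fun j _ => by ring
      _ = 0 := by rw [h', mul_zero]
  rw [integral_congr_ae this]
  simp

lemma phi_add (Dm N1 N2 : Matrix (Fin n) (Fin n) ℝ) :
    ∑ i, ∑ a, Dm i a * (N1 + N2) i a
      = (∑ i, ∑ a, Dm i a * N1 i a) + ∑ i, ∑ a, Dm i a * N2 i a := by
  simp [Matrix.add_apply, mul_add, Finset.sum_add_distrib]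

lemma phi_trace (Dm W : Matrix (Fin n) (Fin n) ℝ) (hW : Wᵀ = W) :
    ∑ i, ∑ a, Dm i a * W i a = (Dm * W).trace := by
  rw [Matrix.trace]
  simp only [Matrix.diag_apply, Matrix.mul_apply]
  refine Finset.sum_congr rfl fun i _ => Finset.sum_congr rfl fun a _ => ?_
  have h := congrFun (congrFun hW a) i
  rw [Matrix.transpose_apply] at h
  rw [← h]

end Aux

lemma pinv_unique {n : ℕ} {A B C : Matrix (Fin n) (Fin n) ℝ}
    (hB1 : B * A * B = B) (hB2 : A * B * A = A) (hB3 : (B * A)ᵀ = B * A) (hB4 : (A * B)ᵀ = A * B)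
    (hC1 : C * A * C = C) (hC2 : A * C * A = A) (hC3 : (C * A)ᵀ = C * A) (hC4 : (A * C)ᵀ = A * C) :
    B = C := by
  have hAB : A * B = A * C := by
    calc A * B = (A * B)ᵀ := hB4.symm
      _ = Bᵀ * Aᵀ := Matrix.transpose_mul _ _
      _ = Bᵀ * (A * C * A)ᵀ := by rw [hC2]
      _ = Bᵀ * (Aᵀ * (Cᵀ * Aᵀ)) := by
          rw [Matrix.transpose_mul (A * C) A, Matrix.transpose_mul A C]
      _ = (Bᵀ * Aᵀ) * (Cᵀ * Aᵀ) := by simp only [Matrix.mul_assoc]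
      _ = (A * B)ᵀ * (A * C)ᵀ := by rw [Matrix.transpose_mul A B, Matrix.transpose_mul A C]
      _ = (A * B) * (A * C) := by rw [hB4, hC4]
      _ = (A * B * A) * C := by simp only [Matrix.mul_assoc]
      _ = A * C := by rw [hB2]
  have hBA : B * A = C * A := by
    calc B * A = (B * A)ᵀ := hB3.symm
      _ = Aᵀ * Bᵀ := Matrix.transpose_mul _ _
      _ = (A * C * A)ᵀ * Bᵀ := by rw [hC2]
      _ = (Aᵀ * (Cᵀ * Aᵀ)) * Bᵀ := by
          rw [Matrix.transpose_mul (A * C) A, Matrix.transpose_mul A C]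
      _ = (Aᵀ * Cᵀ) * (Aᵀ * Bᵀ) := by simp only [Matrix.mul_assoc]
      _ = (C * A)ᵀ * (B * A)ᵀ := by rw [Matrix.transpose_mul C A, Matrix.transpose_mul B A]
      _ = (C * A) * (B * A) := by rw [hC3, hB3]
      _ = C * (A * B * A) := by simp only [Matrix.mul_assoc]
      _ = C * A := by rw [hB2]
  calc B = B * A * B := hB1.symm
    _ = B * (A * C) := by rw [Matrix.mul_assoc, hAB]
    _ = (B * A) * C := by rw [Matrix.mul_assoc]
    _ = (C * A) * C := by rw [hBA]
    _ = C := hC1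

lemma trace_mul_transpose_self_nonneg {n m : ℕ} (E : Matrix (Fin n) (Fin m) ℝ) :
    0 ≤ (E * Eᵀ).trace := by
  rw [Matrix.trace]
  refine Finset.sum_nonneg fun i _ => ?_
  simp only [Matrix.diag_apply, Matrix.mul_apply, Matrix.transpose_apply]
  exact Finset.sum_nonneg fun j _ => mul_self_nonneg _

lemma eq_zero_of_trace_mul_transpose_self {n m : ℕ} {E : Matrix (Fin n) (Fin m) ℝ}
    (h : (E * Eᵀ).trace = 0) : E = 0 := by
  have hsum : ∑ i : Fin n, ∑ j : Fin m, E i j * E i j = 0 := by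
    simpa [Matrix.trace, Matrix.diag_apply, Matrix.mul_apply] using h
  have h1 := (Finset.sum_eq_zero_iff_of_nonneg (fun i _ =>
    Finset.sum_nonneg fun j _ => mul_self_nonneg (E i j))).mp hsum
  ext i j
  have := (Finset.sum_eq_zero_iff_of_nonneg (fun j _ => mul_self_nonneg (E i j))).mp
    (h1 i (Finset.mem_univ i)) j (Finset.mem_univ j)
  simpa [mul_self_eq_zero] using this

open scoped MatrixOrder in
lemma psd_trace_nonneg_and_zero {n m : ℕ} {P : Matrix (Fin n) (Fin n) ℝ}
    {Q : Matrix (Fin m) (Fin m) ℝ} (hP : P.PosSemidef) (hQ : Q.PosSemidef)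
    (Δ : Matrix (Fin n) (Fin m) ℝ) :
    0 ≤ (P * Δ * Q * Δᵀ).trace ∧ ((P * Δ * Q * Δᵀ).trace = 0 → P * Δ * Q = 0) := by
  set R := CFC.sqrt P with hR
  set S := CFC.sqrt Q with hS
  have hRsym : Rᵀ = R := by
    have := (CFC.sqrt_nonneg P).posSemidef.isHermitian
    simpa [Matrix.IsHermitian, Matrix.conjTranspose_eq_transpose_of_trivial] using this
  have hSsym : Sᵀ = S := by
    have := (CFC.sqrt_nonneg Q).posSemidef.isHermitian
    simpa [Matrix.IsHermitian, Matrix.conjTranspose_eq_transpose_of_trivial] using this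
  have hRR : R * R = P := CFC.sqrt_mul_sqrt_self P hP.nonneg
  have hSS : S * S = Q := CFC.sqrt_mul_sqrt_self Q hQ.nonneg
  set E := R * Δ * S with hE
  have hEE : E * Eᵀ = (R * Δ * Q * Δᵀ) * R := by
    rw [hE, Matrix.transpose_mul, Matrix.transpose_mul, hRsym, hSsym, ← hSS]
    simp only [Matrix.mul_assoc]
  have key : (P * Δ * Q * Δᵀ).trace = (E * Eᵀ).trace := by
    rw [hEE, Matrix.trace_mul_comm (R * Δ * Q * Δᵀ) R, ← hRR]
    simp only [Matrix.mul_assoc]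
  constructor
  · rw [key]; exact trace_mul_transpose_self_nonneg E
  · intro h
    rw [key] at h
    have hE0 : E = 0 := eq_zero_of_trace_mul_transpose_self h
    have heq : P * Δ * Q = R * E * S := by
      rw [hE, ← hRR, ← hSS]
      simp only [Matrix.mul_assoc]
    rw [heq, hE0, Matrix.mul_zero, Matrix.zero_mul]

/-- `K` minimizes `E‖X − K Y‖²_D` iff `K = K̂ + A + B` with
`A Cov(Y) = 0` and `D B = 0`, where `K̂ = Cov(X,Y) Cov(Y)⁻`. -/
theorem kalman_gain_minimizers {Ω : Type*} [MeasurableSpace Ω]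
    (μ : Measure Ω) [IsProbabilityMeasure μ] {p q : ℕ}
    (X : Ω → Fin p → ℝ) (ε : Ω → Fin q → ℝ)
    (Z : Matrix (Fin q) (Fin p) ℝ)
    (hXmeas : Measurable X) (hεmeas : Measurable ε)
    (hXL2 : ∀ i, MemLp (fun ω => X ω i) 2 μ)
    (hεL2 : ∀ j, MemLp (fun ω => ε ω j) 2 μ)
    (hXmean : ∀ i, ∫ ω, X ω i ∂μ = 0)
    (hεmean : ∀ j, ∫ ω, ε ω j ∂μ = 0)
    (hindep : IndepFun X ε μ)
    (Y : Ω → Fin q → ℝ) (hY : ∀ ω, Y ω = Z.mulVec (X ω) + ε ω)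
    (D Dm : Matrix (Fin p) (Fin p) ℝ) (hD : D.PosSemidef)
    (hD1 : Dm * D * Dm = Dm) (hD2 : D * Dm * D = D)
    (hD3 : (Dm * D)ᵀ = Dm * D) (hD4 : (D * Dm)ᵀ = D * Dm)
    (Cm : Matrix (Fin q) (Fin q) ℝ)
    (hC1 : Cm * covMatrix μ Y Y * Cm = Cm)
    (hC2 : covMatrix μ Y Y * Cm * covMatrix μ Y Y = covMatrix μ Y Y)
    (hC3 : (Cm * covMatrix μ Y Y)ᵀ = Cm * covMatrix μ Y Y)
    (hC4 : (covMatrix μ Y Y * Cm)ᵀ = covMatrix μ Y Y * Cm) :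
    ∀ K : Matrix (Fin p) (Fin q) ℝ,
      (∀ K' : Matrix (Fin p) (Fin q) ℝ,
        (∫ ω, (X ω - K.mulVec (Y ω)) ⬝ᵥ Dm.mulVec (X ω - K.mulVec (Y ω)) ∂μ) ≤
        ∫ ω, (X ω - K'.mulVec (Y ω)) ⬝ᵥ Dm.mulVec (X ω - K'.mulVec (Y ω)) ∂μ)
      ↔ ∃ A B : Matrix (Fin p) (Fin q) ℝ,
          A * covMatrix μ Y Y = 0 ∧ D * B = 0 ∧
          K = covMatrix μ X Y * Cm + A + B := by
  -- notation
  set C : Matrix (Fin q) (Fin q) ℝ := covMatrix μ Y Y with hCdef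
  set M : Matrix (Fin p) (Fin q) ℝ := covMatrix μ X Y with hMdef
  set S : Matrix (Fin p) (Fin p) ℝ := covMatrix μ X X with hSdef
  set Kh : Matrix (Fin p) (Fin q) ℝ := M * Cm with hKhdef
  -- L2 facts
  have hYL2 : ∀ j, MemLp (fun ω => Y ω j) 2 μ := by
    intro j
    have h : (fun ω => Y ω j) = fun ω => Z.mulVec (X ω) j + ε ω j := by
      funext ω; rw [hY ω]; rfl
    rw [h]
    exact (memL2_mulVec Z hXL2 j).add (hεL2 j)
  have hKYL2 : ∀ (K : Matrix (Fin p) (Fin q) ℝ) i,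
      MemLp (fun ω => K.mulVec (Y ω) i) 2 μ := fun K i => memL2_mulVec K hYL2 i
  have hRL2 : ∀ (K : Matrix (Fin p) (Fin q) ℝ) i,
      MemLp (fun ω => (X ω - K.mulVec (Y ω)) i) 2 μ := by
    intro K i
    have h : (fun ω => (X ω - K.mulVec (Y ω)) i)
        = fun ω => X ω i - K.mulVec (Y ω) i := by funext ω; rfl
    rw [h]; exact (hXL2 i).sub (hKYL2 K i)
  -- basic symmetry
  have hCsym : Cᵀ = C := covMatrix_transpose
  have hCherm : C.IsHermitian := by
    rw [Matrix.IsHermitian]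
    simpa using hCsym
  have hCPSD : C.PosSemidef := by
    refine Matrix.PosSemidef.of_dotProduct_mulVec_nonneg hCherm fun x => ?_
    have hx : star x = x := by simp
    rw [hx, covMatrix_quad hYL2 x]
    exact integral_nonneg fun ω => sq_nonneg _
  -- key kernel fact : Kh * C = M
  have hMC : M * (Cm * C) = M := by
    have hzero : M * (Cm * C - 1) = 0 := by
      ext i j
      have hv : C.mulVec (fun l => (Cm * C - 1) l j) = 0 := by
        funext l
        have hz : C * (Cm * C - 1) = 0 := by
          rw [Matrix.mul_sub, Matrix.mul_one, ← Matrix.mul_assoc, hC2, sub_self]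
        have := congrFun (congrFun hz l) j
        simpa [Matrix.mulVec, dotProduct, Matrix.mul_apply] using this
      have h0 := ker_covMatrix hXL2 hYL2 hv
      have h2 := congrFun h0 i
      simpa [Matrix.mulVec, dotProduct, Matrix.mul_apply] using h2
    have := hzero
    rw [Matrix.mul_sub, Matrix.mul_one, sub_eq_zero] at this
    rw [← Matrix.mul_assoc] at this ⊢
    exact this
  have hKhC : Kh * C = M := by rw [hKhdef, Matrix.mul_assoc]; exact hMC
  have hCKh : C * Khᵀ = Mᵀ := by
    calc C * Khᵀ = Cᵀ * Khᵀ := by rw [hCsym]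
      _ = (Kh * C)ᵀ := (Matrix.transpose_mul _ _).symm
      _ = Mᵀ := by rw [hKhC]
  -- Dm symmetric
  have hDsym : Dᵀ = D := by
    have := hD.isHermitian
    rw [Matrix.IsHermitian] at this
    simpa using this
  have hDmsym : Dmᵀ = Dm := by
    refine pinv_unique (A := D) ?_ ?_ ?_ ?_ hD1 hD2 hD3 hD4
    · -- Dmᵀ * D * Dmᵀ = Dmᵀ
      have := congrArg Matrix.transpose hD1
      rw [Matrix.transpose_mul, Matrix.transpose_mul, hDsym] at this
      calc Dmᵀ * D * Dmᵀ = Dmᵀ * (D * Dmᵀ) := Matrix.mul_assoc _ _ _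
        _ = Dmᵀ := this
    · have := congrArg Matrix.transpose hD2
      rw [Matrix.transpose_mul, Matrix.transpose_mul, hDsym] at this
      calc D * Dmᵀ * D = D * (Dmᵀ * D) := Matrix.mul_assoc _ _ _
        _ = D := this
    · -- (Dmᵀ * D)ᵀ = Dmᵀ * D
      have h1 : Dmᵀ * D = (D * Dm)ᵀ := by rw [Matrix.transpose_mul, hDsym]
      rw [h1, Matrix.transpose_transpose, hD4]
    · have h1 : D * Dmᵀ = (Dm * D)ᵀ := by rw [Matrix.transpose_mul, hDsym]
      rw [h1, Matrix.transpose_transpose, hD3]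
  have hcomm : D * Dm = Dm * D := by
    calc D * Dm = (D * Dm)ᵀ := hD4.symm
      _ = Dmᵀ * Dᵀ := Matrix.transpose_mul _ _
      _ = Dm * D := by rw [hDmsym, hDsym]
  have hDmPSD : Dm.PosSemidef := by
    have h : Dm = Dmᴴ * D * Dm := by
      have hH : Dmᴴ = Dm := by
        rw [Matrix.conjTranspose_eq_transpose_of_trivial]
        simpa using hDmsym
      rw [hH]
      calc Dm = Dm * D * Dm := hD1.symm
        _ = Dm * D * Dm := rfl
    rw [h]
    exact hD.conjTranspose_mul_mul_same Dm
  -- expansion of the objective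
  have hcov : ∀ K : Matrix (Fin p) (Fin q) ℝ,
      covMatrix μ (fun ω => X ω - K.mulVec (Y ω)) (fun ω => X ω - K.mulVec (Y ω))
        = S - M * Kᵀ - K * Mᵀ + K * (C * Kᵀ) := by
    intro K
    have h1 : covMatrix μ (fun ω => X ω - K.mulVec (Y ω)) (fun ω => X ω - K.mulVec (Y ω))
        = covMatrix μ X (fun ω => X ω - K.mulVec (Y ω))
          - covMatrix μ (fun ω => K.mulVec (Y ω)) (fun ω => X ω - K.mulVec (Y ω)) :=
      covMatrix_sub_left hXL2 (hKYL2 K) (hRL2 K)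
    have h2 : covMatrix μ X (fun ω => X ω - K.mulVec (Y ω))
        = S - M * Kᵀ := by
      have ha : covMatrix μ X (fun ω => X ω - K.mulVec (Y ω))
          = covMatrix μ X X - covMatrix μ X (fun ω => K.mulVec (Y ω)) :=
        covMatrix_sub_right hXL2 hXL2 (hKYL2 K)
      have hb : covMatrix μ X (fun ω => K.mulVec (Y ω)) = M * Kᵀ :=
        covMatrix_mulVec_right K hXL2 hYL2
      rw [ha, hb]
    have h3 : covMatrix μ (fun ω => K.mulVec (Y ω)) (fun ω => X ω - K.mulVec (Y ω))
        = K * Mᵀ - K * (C * Kᵀ) := by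
      have ha : covMatrix μ (fun ω => K.mulVec (Y ω)) (fun ω => X ω - K.mulVec (Y ω))
          = K * covMatrix μ Y (fun ω => X ω - K.mulVec (Y ω)) :=
        covMatrix_mulVec_left K hYL2 (hRL2 K)
      have hb : covMatrix μ Y (fun ω => X ω - K.mulVec (Y ω))
          = covMatrix μ Y X - covMatrix μ Y (fun ω => K.mulVec (Y ω)) :=
        covMatrix_sub_right hYL2 hXL2 (hKYL2 K)
      have hc : covMatrix μ Y X = Mᵀ := by
        rw [hMdef, covMatrix_transpose]
      have hd : covMatrix μ Y (fun ω => K.mulVec (Y ω)) = C * Kᵀ :=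
        covMatrix_mulVec_right K hYL2 hYL2
      rw [ha, hb, hc, hd, Matrix.mul_sub]
    rw [h1, h2, h3]
    abel
  have hquad : ∀ K : Matrix (Fin p) (Fin q) ℝ,
      (∫ ω, (X ω - K.mulVec (Y ω)) ⬝ᵥ Dm.mulVec (X ω - K.mulVec (Y ω)) ∂μ)
        = ∑ i, ∑ a, Dm i a * (S - M * Kᵀ - K * Mᵀ + K * (C * Kᵀ)) i a := by
    intro K
    rw [← hcov K]
    exact integral_quadform Dm (hRL2 K)
  -- the algebraic identity
  have halg : ∀ K : Matrix (Fin p) (Fin q) ℝ,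
      S - M * Kᵀ - K * Mᵀ + K * (C * Kᵀ)
        = (S - M * Khᵀ - Kh * Mᵀ + Kh * (C * Khᵀ)) + (K - Kh) * C * (K - Kh)ᵀ := by
    intro K
    have expand : (K - Kh) * C * (K - Kh)ᵀ
        = K * (C * Kᵀ) - K * (C * Khᵀ) - Kh * (C * Kᵀ) + Kh * (C * Khᵀ) := by
      simp only [Matrix.transpose_sub, Matrix.sub_mul, Matrix.mul_sub, Matrix.mul_assoc]
      abel
    have e1 : Kh * (C * Kᵀ) = M * Kᵀ := by rw [← Matrix.mul_assoc, hKhC]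
    have e2 : K * (C * Khᵀ) = K * Mᵀ := by rw [hCKh]
    have e3 : Kh * (C * Khᵀ) = M * Khᵀ := by rw [← Matrix.mul_assoc, hKhC]
    have e4 : Kh * Mᵀ = M * Khᵀ := by rw [← hCKh, ← Matrix.mul_assoc, hKhC]
    rw [expand, e1, e2, e3, e4]
    abel
  -- the full expansion of the objective
  have hDCD : ∀ K : Matrix (Fin p) (Fin q) ℝ, ((K - Kh) * C * (K - Kh)ᵀ)ᵀ
      = (K - Kh) * C * (K - Kh)ᵀ := by
    intro K
    rw [Matrix.transpose_mul, Matrix.transpose_mul, Matrix.transpose_transpose, hCsym,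
      Matrix.mul_assoc]
  have hmain : ∀ K : Matrix (Fin p) (Fin q) ℝ,
      (∫ ω, (X ω - K.mulVec (Y ω)) ⬝ᵥ Dm.mulVec (X ω - K.mulVec (Y ω)) ∂μ)
        = (∫ ω, (X ω - Kh.mulVec (Y ω)) ⬝ᵥ Dm.mulVec (X ω - Kh.mulVec (Y ω)) ∂μ)
          + (Dm * ((K - Kh) * C * (K - Kh)ᵀ)).trace := by
    intro K
    rw [hquad K, halg K, phi_add, ← hquad Kh]
    congr 1
    exact phi_trace Dm _ (hDCD K)
  -- trace facts
  have htr : ∀ K : Matrix (Fin p) (Fin q) ℝ,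
      (Dm * ((K - Kh) * C * (K - Kh)ᵀ)).trace
        = (Dm * (K - Kh) * C * (K - Kh)ᵀ).trace := by
    intro K
    simp only [Matrix.mul_assoc]
  have htnonneg : ∀ K : Matrix (Fin p) (Fin q) ℝ,
      0 ≤ (Dm * ((K - Kh) * C * (K - Kh)ᵀ)).trace := by
    intro K
    rw [htr K]
    exact (psd_trace_nonneg_and_zero hDmPSD hCPSD (K - Kh)).1
  intro K
  constructor
  · -- minimizer → decomposition
    intro hmin
    have h1 := hmin Kh
    rw [hmain K] at h1
    have ht0 : (Dm * ((K - Kh) * C * (K - Kh)ᵀ)).trace = 0 :=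
      le_antisymm (by linarith) (htnonneg K)
    rw [htr K] at ht0
    have h0 : Dm * (K - Kh) * C = 0 :=
      (psd_trace_nonneg_and_zero hDmPSD hCPSD (K - Kh)).2 ht0
    refine ⟨D * Dm * (K - Kh), (K - Kh) - D * Dm * (K - Kh), ?_, ?_, ?_⟩
    · calc D * Dm * (K - Kh) * C = D * (Dm * (K - Kh) * C) := by
            simp only [Matrix.mul_assoc]
        _ = 0 := by rw [h0, Matrix.mul_zero]
    · have hDD : D * (D * Dm * (K - Kh)) = D * (K - Kh) := by
        calc D * (D * Dm * (K - Kh)) = D * (Dm * D) * (K - Kh) := by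
              rw [← hcomm]; simp only [Matrix.mul_assoc]
          _ = (D * Dm * D) * (K - Kh) := by simp only [Matrix.mul_assoc]
          _ = D * (K - Kh) := by rw [hD2]
      rw [Matrix.mul_sub, hDD, sub_self]
    · rw [hKhdef]; abel
  · -- decomposition → minimizer
    rintro ⟨A, B, hA, hB, hK⟩ K'
    have hΔ : K - Kh = A + B := by rw [hK, hKhdef]; abel
    have hDmB : Dm * B = 0 := by
      calc Dm * B = (Dm * D * Dm) * B := by rw [hD1]
        _ = Dm * ((D * Dm) * B) := by simp only [Matrix.mul_assoc]
        _ = Dm * ((Dm * D) * B) := by rw [hcomm]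
        _ = Dm * (Dm * (D * B)) := by simp only [Matrix.mul_assoc]
        _ = 0 := by rw [hB, Matrix.mul_zero, Matrix.mul_zero]
    have h0 : Dm * (K - Kh) * C = 0 := by
      rw [hΔ]
      calc Dm * (A + B) * C = Dm * (A * C) + (Dm * B) * C := by
            rw [Matrix.mul_add, Matrix.add_mul, Matrix.mul_assoc]
        _ = 0 := by rw [hA, hDmB, Matrix.mul_zero, Matrix.zero_mul, add_zero]
    have ht0 : (Dm * ((K - Kh) * C * (K - Kh)ᵀ)).trace = 0 := by
      rw [htr K]
      have : Dm * (K - Kh) * C * (K - Kh)ᵀ = 0 := by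
        rw [h0, Matrix.zero_mul]
      rw [this, Matrix.trace_zero]
    rw [hmain K, hmain K', ht0, add_zero]
    have := htnonneg K'
    linarith
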